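/- Let Δ be a simplex and σ another simplex. Then there is a PL-homeomorphism (∂σ)' ∗ Δ ≅ σ' ∗ ∂Δ between the join of the barycentric subdivision of ∂σ with Δ and the join of the barycentric subdivision of σ with ∂Δ; in particular, identifying Δ with the cone Cone(w, ∂Δ), the vertex w can be 'pushed' to the barycenter of σ. -/

import Mathlib

open Finset Set

/-- An abstract simplicial complex on vertex type `V`: a downward-closed collection of
nonempty finite subsets of `V`. -/
structure AbsSC (V : Type*) where
  faces : Set (Finset V)
  nonempty_of_mem : ∀ s ∈ faces, s.Nonempty
  down_closed : ∀ s ∈ faces, ∀ t ⊆ s, t.Nonempty → t ∈ faces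

namespace AbsSC

variable {V : Type*}

/-- The barycentric subdivision: faces are nonempty chains of faces. -/
def sd (X : AbsSC V) : AbsSC (Finset V) where
  faces := {c | c.Nonempty ∧ ↑c ⊆ X.faces ∧ IsChain (· ⊆ ·) (c : Set (Finset V))}
  nonempty_of_mem := fun _ hs => hs.1
  down_closed := fun _ hs _ hts htne =>
    ⟨htne, fun _ hx => hs.2.1 (hts hx), by
      intro a ha b hb hab
      exact hs.2.2 (Finset.coe_subset.mpr hts ha) (Finset.coe_subset.mpr hts hb) hab⟩

/-- The link of a face `σ`: faces disjoint from `σ` whose union with `σ` is a face. -/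
def link [DecidableEq V] (X : AbsSC V) (σ : Finset V) : AbsSC V where
  faces := {τ | τ.Nonempty ∧ τ ∩ σ = ∅ ∧ τ ∪ σ ∈ X.faces}
  nonempty_of_mem := fun _ hs => hs.1
  down_closed := fun s hs t hts htne => by
    refine ⟨htne, ?_, ?_⟩
    · rw [← Finset.subset_empty, ← hs.2.1]
      exact Finset.inter_subset_inter hts (le_refl σ)
    · exact X.down_closed _ hs.2.2 _ (Finset.union_subset_union hts (le_refl σ))
        (htne.mono Finset.subset_union_left)

end AbsSC

namespace AbsSC

variable {V : Type*} [DecidableEq V]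

/-- A complex is connected if any two of its vertices are joined by an edge path. -/
def ComplexConnected (P : AbsSC V) : Prop :=
  ∀ v w : V, ({v} : Finset V) ∈ P.faces → ({w} : Finset V) ∈ P.faces →
    Relation.ReflTransGen (fun a b => ({a, b} : Finset V) ∈ P.faces) v w

/-- A finite connected pure `d`-dimensional complex where every `(d-1)`-simplex lies in
one or two `d`-simplices. -/
def IsPseudomanifoldWithBoundary (d : ℕ) (P : AbsSC V) : Prop :=
  P.faces.Finite ∧ P.ComplexConnected ∧
  (∀ σ ∈ P.faces, σ.card ≤ d + 1) ∧
  (∀ σ ∈ P.faces, ∃ δ ∈ P.faces, δ.card = d + 1 ∧ σ ⊆ δ) ∧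
  (∀ δ ∈ P.faces, δ.card = d →
    1 ≤ {σ ∈ P.faces | σ.card = d + 1 ∧ δ ⊆ σ}.ncard ∧
    {σ ∈ P.faces | σ.card = d + 1 ∧ δ ⊆ σ}.ncard ≤ 2)

/-- The faces of the boundary `∂P`: faces of the `(d-1)`-simplices contained in exactly
one `d`-simplex. -/
def boundaryFaces (d : ℕ) (P : AbsSC V) : Set (Finset V) :=
  {τ | τ.Nonempty ∧ ∃ δ ∈ P.faces, δ.card = d ∧
    {σ ∈ P.faces | σ.card = d + 1 ∧ δ ⊆ σ}.ncard = 1 ∧ τ ⊆ δ}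

/-- The standard vertex embedding `v ↦ e_v`. -/
def vtx [DecidableEq V] (v : V) : V → ℝ := fun w => if w = v then 1 else 0

/-- The geometric realization of an abstract simplicial complex, inside the standard
simplex of `V → ℝ`. -/
def realize [DecidableEq V] (X : AbsSC V) : Set (V → ℝ) :=
  ⋃ σ ∈ X.faces, convexHull ℝ (vtx '' (σ : Set V))

end AbsSC

/-- A map is piecewise linear (affine) on `A` if `A` is a finite union of convex hulls of
finite sets, on each of which the map agrees with an affine map. -/
def IsPLOn {E F : Type*} [AddCommGroup E] [Module ℝ E] [AddCommGroup F] [Module ℝ F]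
    (f : E → F) (A : Set E) : Prop :=
  ∃ T : Finset (Finset E), (A = ⋃ c ∈ T, convexHull ℝ (c : Set E)) ∧
    ∀ c ∈ T, ∃ g : E →ᵃ[ℝ] F, Set.EqOn f g (convexHull ℝ (c : Set E))

/-- Two abstract simplicial complexes are PL-homeomorphic if there is a piecewise linear
bijection between their realizations with piecewise linear inverse. -/
def PLHomeo {V W : Type*} [DecidableEq V] [DecidableEq W] (X : AbsSC V) (Y : AbsSC W) :
    Prop :=
  ∃ f : (V → ℝ) → (W → ℝ), ∃ g : (W → ℝ) → (V → ℝ),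
    Set.BijOn f X.realize Y.realize ∧ IsPLOn f X.realize ∧ IsPLOn g Y.realize ∧
    (∀ x ∈ X.realize, g (f x) = x) ∧ (∀ y ∈ Y.realize, f (g y) = y)

/-- The full `m`-simplex as an abstract simplicial complex. -/
def stdSimplexC (m : ℕ) : AbsSC (Fin (m + 1)) where
  faces := {s | s.Nonempty}
  nonempty_of_mem := fun _ hs => hs
  down_closed := fun _ _ _ _ htne => htne

/-- The boundary of the `(m+1)`-simplex: the standard combinatorial `m`-sphere. -/
def stdSphereC (m : ℕ) : AbsSC (Fin (m + 2)) where
  faces := {s | s.Nonempty ∧ s ≠ Finset.univ}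
  nonempty_of_mem := fun _ hs => hs.1
  down_closed := fun s hs t hts htne =>
    ⟨htne, fun h => hs.2 (Finset.univ_subset_iff.mp (h ▸ hts))⟩

/-- A combinatorial `m`-sphere: a complex PL-homeomorphic to the boundary of an
`(m+1)`-simplex. -/
def IsCombSphere {V : Type*} [DecidableEq V] (m : ℕ) (X : AbsSC V) : Prop :=
  PLHomeo X (stdSphereC m)

/-- A combinatorial `m`-disc: a complex PL-homeomorphic to an `m`-simplex. -/
def IsCombDisc {V : Type*} [DecidableEq V] (m : ℕ) (X : AbsSC V) : Prop :=
  PLHomeo X (stdSimplexC m)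

/-- A combinatorial `m`-manifold (possibly with boundary): the link of each `p`-simplex
is a combinatorial `(m-p-1)`-sphere or `(m-p-1)`-disc. -/
def IsCombManifold {V : Type*} [DecidableEq V] (m : ℕ) (X : AbsSC V) : Prop :=
  ∀ σ ∈ X.faces, IsCombSphere (m - σ.card) (X.link σ) ∨ IsCombDisc (m - σ.card) (X.link σ)

/-- A `d`-pseudomanifold with boundary has isolated singularities: the link of every
simplex of positive dimension is PL-homeomorphic to the boundary of a `(d-k)`-simplex
(if not contained in `∂P`) or to a `(d-k-1)`-simplex (if contained in `∂P`). -/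
def HasIsolatedSingularities {V : Type*} [DecidableEq V] (d : ℕ) (P : AbsSC V) : Prop :=
  ∀ σ ∈ P.faces, 2 ≤ σ.card →
    (σ ∉ P.boundaryFaces d → IsCombSphere (d - σ.card) (P.link σ)) ∧
    (σ ∈ P.boundaryFaces d → IsCombDisc (d - σ.card) (P.link σ))

/-- The join `X ∗ Y` of two abstract simplicial complexes. -/
def joinC {α β : Type*} (X : AbsSC α) (Y : AbsSC β) : AbsSC (α ⊕ β) where
  faces := {s | s.Nonempty ∧ (s.toLeft.Nonempty → s.toLeft ∈ X.faces) ∧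
    (s.toRight.Nonempty → s.toRight ∈ Y.faces)}
  nonempty_of_mem := fun _ h => h.1
  down_closed := fun s hs t hts htne => by
    have hL : t.toLeft ⊆ s.toLeft := fun a ha =>
      Finset.mem_toLeft.mpr (hts (Finset.mem_toLeft.mp ha))
    have hR : t.toRight ⊆ s.toRight := fun a ha =>
      Finset.mem_toRight.mpr (hts (Finset.mem_toRight.mp ha))
    exact ⟨htne, fun h => X.down_closed _ (hs.2.1 (h.mono hL)) _ hL h,
      fun h => Y.down_closed _ (hs.2.2 (h.mono hR)) _ hR h⟩

/-- The boundary of the standard `k`-simplex (possibly empty, when `k = 0`). -/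
def stdBoundaryC (k : ℕ) : AbsSC (Fin (k + 1)) where
  faces := {s | s.Nonempty ∧ s ≠ Finset.univ}
  nonempty_of_mem := fun _ hs => hs.1
  down_closed := fun s hs t hts htne =>
    ⟨htne, fun h => hs.2 (Finset.univ_subset_iff.mp (h ▸ hts))⟩

/-! ### Auxiliary material for the proof -/

section general
variable {V : Type*} [Fintype V] [DecidableEq V]

lemma mem_stdhull (s : Finset V) (x : V → ℝ) :
    x ∈ convexHull ℝ (AbsSC.vtx '' (s : Set V)) ↔
      (∀ v, 0 ≤ x v) ∧ (∑ v, x v = 1) ∧ (∀ v ∉ s, x v = 0) := by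
  constructor
  · intro hx
    have hconv : Convex ℝ {x : V → ℝ | (∀ v, 0 ≤ x v) ∧ (∑ v, x v = 1) ∧ (∀ v ∉ s, x v = 0)} := by
      intro x hx y hy a b ha hb hab
      refine ⟨fun v => add_nonneg (mul_nonneg ha (hx.1 v)) (mul_nonneg hb (hy.1 v)), ?_,
        fun v hv => ?_⟩
      · simp only [Pi.add_apply, Pi.smul_apply, smul_eq_mul, Finset.sum_add_distrib,
          ← Finset.mul_sum, hx.2.1, hy.2.1]
        linarith
      · simp [hx.2.2 v hv, hy.2.2 v hv]
    refine convexHull_min ?_ hconv hx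
    rintro _ ⟨v, hv, rfl⟩
    refine ⟨fun w => by unfold AbsSC.vtx; positivity, ?_, fun w hw => ?_⟩
    · simp [AbsSC.vtx]
    · simp only [AbsSC.vtx]
      rw [if_neg]
      rintro rfl; exact hw hv
  · rintro ⟨h0, h1, hs⟩
    have hsum : ∑ v ∈ s, x v = 1 := by
      rw [← h1]
      exact Finset.sum_subset (Finset.subset_univ s) (fun v _ hv => hs v hv)
    have := Finset.centerMass_mem_convexHull (t := s) (w := x) (z := AbsSC.vtx)
      (fun i _ => h0 i) (by rw [hsum]; norm_num)
      (fun i hi => Set.mem_image_of_mem _ hi)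
    convert this using 1
    rw [Finset.centerMass, hsum, inv_one, one_smul]
    funext u
    rw [Finset.sum_apply]
    simp only [Pi.smul_apply, AbsSC.vtx, smul_eq_mul, mul_ite, mul_one, mul_zero]
    rw [Finset.sum_ite_eq s u x]
    split
    · rfl
    · exact hs u ‹_›

lemma realize_iff (X : AbsSC V) (x : V → ℝ) :
    x ∈ X.realize ↔ ∃ s ∈ X.faces, (∀ v, 0 ≤ x v) ∧ (∑ v, x v = 1) ∧ (∀ v ∉ s, x v = 0) := by
  unfold AbsSC.realize
  simp only [Set.mem_iUnion, exists_prop]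
  constructor
  · rintro ⟨σ, hσ, hx⟩
    exact ⟨σ, hσ, (mem_stdhull σ x).1 hx⟩
  · rintro ⟨σ, hσ, hx⟩
    exact ⟨σ, hσ, (mem_stdhull σ x).2 hx⟩

omit [Fintype V] in
lemma stdhull_subset_realize {X : AbsSC V} {σ : Finset V} (hσ : σ ∈ X.faces) :
    convexHull ℝ (AbsSC.vtx '' (σ : Set V)) ⊆ X.realize := by
  unfold AbsSC.realize
  exact Set.subset_biUnion_of_mem
    (u := fun σ : Finset V => convexHull ℝ (AbsSC.vtx '' (σ : Set V))) (x := σ) hσ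

lemma isPLOn_linear (X : AbsSC V) (f : (V → ℝ) →ₗ[ℝ] (V → ℝ)) : IsPLOn ⇑f X.realize := by
  classical
  refine ⟨(Set.toFinite X.faces).toFinset.image (fun s => s.image AbsSC.vtx), ?_, ?_⟩
  · ext x
    simp only [AbsSC.realize, Set.mem_iUnion, Finset.mem_image, Set.Finite.mem_toFinset,
      exists_prop, Set.mem_iUnion]
    constructor
    · rintro ⟨σ, hσ, hx⟩
      exact ⟨σ.image AbsSC.vtx, ⟨σ, hσ, rfl⟩, by rwa [Finset.coe_image]⟩
    · rintro ⟨c, ⟨σ, hσ, rfl⟩, hx⟩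
      exact ⟨σ, hσ, by rwa [Finset.coe_image] at hx⟩
  · intro c _
    exact ⟨f.toAffineMap, fun x _ => rfl⟩

end general

namespace JoinSd

abbrev VT (n m : ℕ) := Finset (Fin (n + 1)) ⊕ Fin (m + 1)

noncomputable section
variable {n m : ℕ}

/-- Indicator of the right-hand (`Δ`) coordinates. -/
def em : VT n m → ℝ := Sum.elim (fun _ => 0) (fun _ => 1)

/-- Indicator of the barycenter coordinate `inl univ`. -/
def eb : VT n m → ℝ := fun v => if v = Sum.inl Finset.univ then 1 else 0

/-- The barycenter of the `Δ` factor. -/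
def ubar : VT n m → ℝ := Sum.elim (fun _ => 0) (fun _ => ((m : ℝ) + 1)⁻¹)

/-- Minimum of the `Δ`-coordinates. -/
def cmin (x : VT n m → ℝ) : ℝ :=
  Finset.univ.inf' ⟨(0 : Fin (m + 1)), Finset.mem_univ _⟩ (fun j => x (Sum.inr j))

def phi (x : VT n m → ℝ) : VT n m → ℝ :=
  fun v => x v + ((m : ℝ) + 1) * cmin x * eb v - cmin x * em v

def psi (x : VT n m → ℝ) : VT n m → ℝ :=
  fun v => x v - x (Sum.inl Finset.univ) * eb v
    + x (Sum.inl Finset.univ) / ((m : ℝ) + 1) * em v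

lemma cmin_le (x : VT n m → ℝ) (j : Fin (m + 1)) : cmin x ≤ x (Sum.inr j) :=
  Finset.inf'_le _ (Finset.mem_univ j)

lemma le_cmin {x : VT n m → ℝ} {a : ℝ} (h : ∀ j, a ≤ x (Sum.inr j)) : a ≤ cmin x :=
  Finset.le_inf' _ _ (fun j _ => h j)

lemma exists_cmin (x : VT n m → ℝ) : ∃ j, x (Sum.inr j) = cmin x := by
  obtain ⟨j, -, hj⟩ := Finset.exists_mem_eq_inf' (s := (Finset.univ : Finset (Fin (m + 1))))
    ⟨(0 : Fin (m + 1)), Finset.mem_univ _⟩ (fun j => x (Sum.inr j))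
  exact ⟨j, hj.symm⟩

lemma sum_em : ∑ v : VT n m, em v = (m : ℝ) + 1 := by
  rw [Fintype.sum_sum_type]
  simp [em]

lemma sum_eb : ∑ v : VT n m, eb v = 1 := by
  simp [eb, Finset.sum_ite_eq]

lemma mhalf_ne : ((m : ℝ) + 1) ≠ 0 := by positivity

lemma mem_joinC {α β : Type*} [DecidableEq α] [DecidableEq β] {X : AbsSC α} {Y : AbsSC β}
    {s : Finset (α ⊕ β)} : s ∈ (joinC X Y).faces ↔
      s.Nonempty ∧ (s.toLeft.Nonempty → s.toLeft ∈ X.faces) ∧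
        (s.toRight.Nonempty → s.toRight ∈ Y.faces) := Iff.rfl

lemma mem_sd {W : Type*} {X : AbsSC W} {c : Finset (Finset W)} :
    c ∈ X.sd.faces ↔ c.Nonempty ∧ ↑c ⊆ X.faces ∧ IsChain (· ⊆ ·) (c : Set (Finset W)) :=
  Iff.rfl

lemma mem_stdSimplexC {k : ℕ} {s : Finset (Fin (k + 1))} :
    s ∈ (stdSimplexC k).faces ↔ s.Nonempty := Iff.rfl

lemma mem_stdBoundaryC {k : ℕ} {s : Finset (Fin (k + 1))} :
    s ∈ (stdBoundaryC k).faces ↔ s.Nonempty ∧ s ≠ Finset.univ := Iff.rfl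

lemma apply_univ_eq_zero {x : VT n m → ℝ}
    (hx : x ∈ (joinC (stdBoundaryC n).sd (stdSimplexC m)).realize) :
    x (Sum.inl Finset.univ) = 0 := by
  obtain ⟨s, hs, h0, h1, hv⟩ := (realize_iff _ _).1 hx
  refine hv _ (fun hmem => ?_)
  have h2 : (Finset.univ : Finset (Fin (n + 1))) ∈ s.toLeft := Finset.mem_toLeft.mpr hmem
  exact ((hs.2.1 ⟨_, h2⟩).2.1 h2).2 rfl

lemma exists_right_zero {y : VT n m → ℝ}
    (hy : y ∈ (joinC (stdSimplexC n).sd (stdBoundaryC m)).realize) :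
    ∃ j, y (Sum.inr j) = 0 := by
  obtain ⟨t, ht, h0, h1, hv⟩ := (realize_iff _ _).1 hy
  have hne : t.toRight ≠ Finset.univ := by
    intro h
    exact (ht.2.2 (h ▸ Finset.univ_nonempty)).2 h
  have hnall : ¬ ∀ j, j ∈ t.toRight := fun hall => hne (Finset.eq_univ_iff_forall.mpr hall)
  push_neg at hnall
  obtain ⟨j, hj⟩ := hnall
  exact ⟨j, hv _ (fun hm => hj (Finset.mem_toRight.mpr hm))⟩

lemma psi_phi {x : VT n m → ℝ} (h0 : x (Sum.inl Finset.univ) = 0) : psi (phi x) = x := by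
  have hb : phi x (Sum.inl Finset.univ) = ((m : ℝ) + 1) * cmin x := by
    simp [phi, eb, em, h0]
  funext v
  simp only [psi, phi, h0]
  simp only [eb, em, Sum.elim_inl, if_pos rfl]
  field_simp
  simp only [↓reduceIte]
  ring

lemma phi_psi {y : VT n m → ℝ} (h0 : ∀ v, 0 ≤ y v) (hz : ∃ j, y (Sum.inr j) = 0) :
    phi (psi y) = y := by
  obtain ⟨j1, hj1⟩ := hz
  have key : ∀ j, psi y (Sum.inr j)
      = y (Sum.inr j) + y (Sum.inl Finset.univ) / ((m : ℝ) + 1) := by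
    intro j; simp [psi, eb, em]
  have hcm : cmin (psi y) = y (Sum.inl Finset.univ) / ((m : ℝ) + 1) := by
    apply le_antisymm
    · calc cmin (psi y) ≤ psi y (Sum.inr j1) := cmin_le _ _
        _ = y (Sum.inl Finset.univ) / ((m : ℝ) + 1) := by rw [key, hj1, zero_add]
    · exact le_cmin (fun j => by rw [key]; have := h0 (Sum.inr j); linarith)
  funext v
  simp only [phi, psi, hcm]
  simp only [eb, em, Sum.elim_inl, if_pos rfl]
  field_simp
  split_ifs <;> ring

lemma phi_mem {x : VT n m → ℝ}
    (hx : x ∈ (joinC (stdBoundaryC n).sd (stdSimplexC m)).realize) :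
    phi x ∈ (joinC (stdSimplexC n).sd (stdBoundaryC m)).realize := by
  obtain ⟨s, hs, h0, h1, hv⟩ := (realize_iff _ _).1 hx
  obtain ⟨j0, hj0⟩ := exists_cmin x
  have hc0 : 0 ≤ cmin x := le_cmin (fun j => h0 _)
  set sL : Finset (Finset (Fin (n + 1))) := s.toLeft ∪ {Finset.univ} with hsL
  set sR : Finset (Fin (m + 1)) := s.toRight.erase j0 with hsR
  set s' : Finset (VT n m) := sL.image Sum.inl ∪ sR.image Sum.inr with hs'
  have htL : s'.toLeft = sL := by
    ext a; simp [hs', Finset.mem_toLeft]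
  have htR : s'.toRight = sR := by
    ext a; simp [hs', Finset.mem_toRight]
  refine (realize_iff _ _).2 ⟨s', mem_joinC.mpr ⟨⟨Sum.inl Finset.univ, ?_⟩, ?_, ?_⟩, ?_, ?_, ?_⟩
  · simp [hs', hsL]
  · intro _
    rw [htL]
    refine mem_sd.mpr ⟨⟨Finset.univ, by simp [hsL]⟩, ?_, ?_⟩
    · intro τ hτ
      rcases Finset.mem_union.1 hτ with h | h
      · exact mem_stdSimplexC.mpr ((hs.2.1 ⟨τ, h⟩).2.1 h).1
      · rw [Finset.mem_singleton.1 h]; exact mem_stdSimplexC.mpr Finset.univ_nonempty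
    · intro τ1 h1 τ2 h2 hne
      rcases Finset.mem_union.1 (Finset.mem_coe.1 h1) with ha | ha
      · rcases Finset.mem_union.1 (Finset.mem_coe.1 h2) with hb | hb
        · exact (hs.2.1 ⟨τ1, ha⟩).2.2 (Finset.mem_coe.2 ha) (Finset.mem_coe.2 hb) hne
        · rw [Finset.mem_singleton.1 hb]; exact Or.inl (Finset.subset_univ _)
      · rw [Finset.mem_singleton.1 ha]; exact Or.inr (Finset.subset_univ _)
  · intro hne
    rw [htR] at hne ⊢
    refine mem_stdBoundaryC.mpr ⟨hne, fun hEq => ?_⟩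
    have : j0 ∈ sR := by rw [hEq]; exact Finset.mem_univ j0
    exact Finset.notMem_erase j0 _ this
  · intro v
    rcases v with τ | k
    · simp only [phi, eb, em, Sum.elim_inl, mul_zero, sub_zero]
      split_ifs <;> nlinarith [h0 (Sum.inl τ), hc0, mhalf_ne (m := m)]
    · simp only [phi, eb, em, Sum.elim_inr, mul_one]
      rw [if_neg (by simp)]
      have := cmin_le x k
      have := h0 (Sum.inr k)
      nlinarith
  · simp only [phi, Finset.sum_add_distrib, Finset.sum_sub_distrib, ← Finset.mul_sum,
      sum_eb, sum_em, h1]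
    ring
  · intro v hvn
    rcases v with τ | k
    · have hτl : τ ∉ sL := fun h => hvn (Finset.mem_union_left _ (Finset.mem_image_of_mem _ h))
      rw [hsL, Finset.mem_union, Finset.mem_singleton] at hτl
      push_neg at hτl
      have hx0 : x (Sum.inl τ) = 0 :=
        hv _ (fun h => hτl.1 (Finset.mem_toLeft.mpr h))
      simp [phi, eb, em, hx0, hτl.2]
    · have hkr : k ∉ sR := fun h => hvn (Finset.mem_union_right _ (Finset.mem_image_of_mem _ h))
      rw [hsR, Finset.mem_erase] at hkr
      push_neg at hkr
      by_cases hk : k = j0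
      · subst hk
        simp [phi, eb, em, hj0]
      · have hks : k ∉ s.toRight := hkr hk
        have hx0 : x (Sum.inr k) = 0 := hv _ (fun h => hks (Finset.mem_toRight.mpr h))
        have hcle := cmin_le x k
        have hc : cmin x = 0 := le_antisymm (by rw [hx0] at hcle; exact hcle) hc0
        simp [phi, eb, em, hx0, hc]

lemma psi_mem {y : VT n m → ℝ}
    (hy : y ∈ (joinC (stdSimplexC n).sd (stdBoundaryC m)).realize) :
    psi y ∈ (joinC (stdBoundaryC n).sd (stdSimplexC m)).realize := by
  obtain ⟨t, ht, h0, h1, hv⟩ := (realize_iff _ _).1 hy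
  set tL : Finset (Finset (Fin (n + 1))) := t.toLeft.erase Finset.univ with htLdef
  set s'' : Finset (VT n m) :=
    tL.image Sum.inl ∪ (Finset.univ : Finset (Fin (m + 1))).image Sum.inr with hs''
  have htL : s''.toLeft = tL := by
    ext a; simp [hs'', Finset.mem_toLeft]
  have htR : s''.toRight = Finset.univ := by
    ext a; simp [hs'', Finset.mem_toRight]
  refine (realize_iff _ _).2 ⟨s'', mem_joinC.mpr ⟨⟨Sum.inr 0, ?_⟩, ?_, ?_⟩, ?_, ?_, ?_⟩
  · simp [hs'']
  · intro hne
    rw [htL] at hne ⊢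
    obtain ⟨τ0, hτ0⟩ := hne
    have htLne : t.toLeft.Nonempty := ⟨τ0, Finset.mem_of_mem_erase hτ0⟩
    refine mem_sd.mpr ⟨⟨τ0, hτ0⟩, ?_, ?_⟩
    · intro τ hτ
      have h1' := Finset.mem_erase.1 hτ
      exact mem_stdBoundaryC.mpr ⟨mem_stdSimplexC.mp ((ht.2.1 htLne).2.1 h1'.2), h1'.1⟩
    · exact ((ht.2.1 htLne).2.2).mono
        (Finset.coe_subset.2 (Finset.erase_subset _ _))
  · intro _
    rw [htR]
    exact mem_stdSimplexC.mpr Finset.univ_nonempty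
  · intro v
    rcases v with τ | k
    · by_cases hτ : τ = Finset.univ
      · subst hτ; simp [psi, eb, em]
      · simp only [psi, eb, em, Sum.elim_inl, mul_zero, add_zero]
        rw [if_neg (by simp [hτ]), mul_zero, sub_zero]
        exact h0 _
    · simp only [psi, eb, em, Sum.elim_inr, mul_one]
      rw [if_neg (by simp), mul_zero, sub_zero]
      have hd : 0 ≤ y (Sum.inl Finset.univ) / ((m : ℝ) + 1) :=
        div_nonneg (h0 _) (by positivity)
      have := h0 (Sum.inr k)
      linarith
  · simp only [psi, Finset.sum_add_distrib, Finset.sum_sub_distrib, ← Finset.mul_sum,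
      sum_eb, sum_em, h1]
    field_simp
    ring
  · intro v hvn
    rcases v with τ | k
    · by_cases hτ : τ = Finset.univ
      · subst hτ; simp [psi, eb, em]
      · have hτt : τ ∉ tL := fun h => hvn (Finset.mem_union_left _ (Finset.mem_image_of_mem _ h))
        have hτt2 : τ ∉ t.toLeft := fun h => hτt (Finset.mem_erase.2 ⟨hτ, h⟩)
        have hy0 : y (Sum.inl τ) = 0 := hv _ (fun h => hτt2 (Finset.mem_toLeft.mpr h))
        simp [psi, eb, em, hτ, hy0]
    · exact (hvn (Finset.mem_union_right _ (Finset.mem_image_of_mem _ (Finset.mem_univ k)))).elim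

/-- `psi` as a linear map. -/
def psiL : ((VT n m) → ℝ) →ₗ[ℝ] ((VT n m) → ℝ) where
  toFun := psi
  map_add' x y := by funext v; simp only [psi, Pi.add_apply]; ring
  map_smul' c x := by funext v; simp only [psi, Pi.smul_apply, smul_eq_mul,
    RingHom.id_apply]; ring

/-- The affine model for `phi` on the piece where the `j`-th coordinate is minimal. -/
def gphiL (j : Fin (m + 1)) : ((VT n m) → ℝ) →ₗ[ℝ] ((VT n m) → ℝ) where
  toFun := fun x v => x v + ((m : ℝ) + 1) * x (Sum.inr j) * eb v - x (Sum.inr j) * em v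
  map_add' x y := by funext v; simp only [Pi.add_apply]; ring
  map_smul' c x := by funext v; simp only [Pi.smul_apply, smul_eq_mul, RingHom.id_apply]; ring

lemma piece_subset {s : Finset (VT n m)}
    (hs : s ∈ (joinC (stdBoundaryC n).sd (stdSimplexC m)).faces) (j : Fin (m + 1)) :
    convexHull ℝ (↑(insert ubar ((s.erase (Sum.inr j)).image AbsSC.vtx)) : Set (VT n m → ℝ))
      ⊆ (joinC (stdBoundaryC n).sd (stdSimplexC m)).realize := by
  classical
  set σf : Finset (VT n m) :=
    s.toLeft.image Sum.inl ∪ (Finset.univ : Finset (Fin (m + 1))).image Sum.inr with hσfdef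
  have hL : σf.toLeft = s.toLeft := by ext a; simp [hσfdef, Finset.mem_toLeft]
  have hR : σf.toRight = Finset.univ := by ext a; simp [hσfdef, Finset.mem_toRight]
  have hσf : σf ∈ (joinC (stdBoundaryC n).sd (stdSimplexC m)).faces := by
    refine mem_joinC.mpr ⟨⟨Sum.inr 0, by simp [hσfdef]⟩, ?_, ?_⟩
    · rw [hL]; exact hs.2.1
    · rw [hR]; intro _; exact mem_stdSimplexC.mpr Finset.univ_nonempty
  refine (convexHull_min ?_ (convex_convexHull ℝ _)).trans (stdhull_subset_realize hσf)
  intro p hp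
  rcases Finset.mem_insert.1 (Finset.mem_coe.1 hp) with rfl | hp'
  · refine (mem_stdhull _ _).2 ⟨?_, ?_, ?_⟩
    · intro v; rcases v with τ | k <;> simp [ubar] <;> positivity
    · rw [Fintype.sum_sum_type]
      simp only [ubar, Sum.elim_inl, Sum.elim_inr, Finset.sum_const, Finset.card_univ,
        Fintype.card_fin, smul_eq_mul, Finset.sum_const_zero, zero_add]
      push_cast
      field_simp
      simp only [smul_zero, zero_add, nsmul_eq_mul]
      push_cast
      field_simp
    · intro v hvσ
      rcases v with τ | k
      · simp [ubar]
      · exact (hvσ (Finset.mem_union_right _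
          (Finset.mem_image_of_mem _ (Finset.mem_univ k)))).elim
  · obtain ⟨v, hvmem, rfl⟩ := Finset.mem_image.1 hp'
    apply subset_convexHull
    refine Set.mem_image_of_mem _ ?_
    have hvs : v ∈ s := Finset.mem_of_mem_erase hvmem
    rcases v with τ | k
    · exact Finset.mem_coe.2 (Finset.mem_union_left _
        (Finset.mem_image_of_mem _ (Finset.mem_toLeft.mpr hvs)))
    · exact Finset.mem_coe.2 (Finset.mem_union_right _
        (Finset.mem_image_of_mem _ (Finset.mem_univ k)))

lemma cover {x : VT n m → ℝ}
    (hx : x ∈ (joinC (stdBoundaryC n).sd (stdSimplexC m)).realize) :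
    ∃ s ∈ (joinC (stdBoundaryC n).sd (stdSimplexC m)).faces, ∃ j : Fin (m + 1),
      x ∈ convexHull ℝ (↑(insert ubar ((s.erase (Sum.inr j)).image AbsSC.vtx)) : Set (VT n m → ℝ)) := by
  classical
  obtain ⟨s, hs, h0, h1, hv⟩ := (realize_iff _ _).1 hx
  by_cases hz : ∃ j, x (Sum.inr j) = 0
  · obtain ⟨j, hj⟩ := hz
    refine ⟨s, hs, j, ?_⟩
    have hx' : x ∈ convexHull ℝ (AbsSC.vtx '' ↑(s.erase (Sum.inr j))) := by
      refine (mem_stdhull _ _).2 ⟨h0, h1, ?_⟩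
      intro v hvm
      rw [Finset.mem_erase] at hvm
      push_neg at hvm
      by_cases hvj : v = Sum.inr j
      · rw [hvj]; exact hj
      · exact hv _ (hvm hvj)
    have hsub : (AbsSC.vtx '' ↑(s.erase (Sum.inr j)))
        ⊆ (↑(insert ubar ((s.erase (Sum.inr j)).image AbsSC.vtx)) : Set (VT n m → ℝ)) := by
      rw [Finset.coe_insert, ← Finset.coe_image]
      exact Set.subset_insert _ _
    exact convexHull_mono hsub hx'
  · push_neg at hz
    obtain ⟨j0, hj0⟩ := exists_cmin x
    have hc0 : 0 ≤ cmin x := le_cmin fun j => h0 _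
    have hcpos : 0 < cmin x := hc0.lt_of_ne (fun h => hz j0 (by rw [hj0, ← h]))
    set θ : ℝ := ((m : ℝ) + 1) * cmin x with hθdef
    have hθ0 : 0 < θ := mul_pos (by positivity) hcpos
    have hθ1 : θ ≤ 1 := by
      have hle : ∑ _j : Fin (m + 1), cmin x ≤ ∑ j, x (Sum.inr j) :=
        Finset.sum_le_sum fun j _ => cmin_le x j
      have hsum_inr : ∑ j, x (Sum.inr j) ≤ 1 := by
        rw [← h1, Fintype.sum_sum_type]
        have hnn : 0 ≤ ∑ τ, x (Sum.inl τ) := Finset.sum_nonneg fun τ _ => h0 _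
        linarith
      rw [Finset.sum_const, Finset.card_univ, Fintype.card_fin, nsmul_eq_mul] at hle
      push_cast at hle
      rw [hθdef]
      linarith
    refine ⟨s, hs, j0, ?_⟩
    by_cases hθe : θ = 1
    · have hinr1 : ∑ j, x (Sum.inr j) = 1 := by
        have hle : ∑ _j : Fin (m + 1), cmin x ≤ ∑ j, x (Sum.inr j) :=
          Finset.sum_le_sum fun j _ => cmin_le x j
        rw [Finset.sum_const, Finset.card_univ, Fintype.card_fin, nsmul_eq_mul] at hle
        push_cast at hle
        have hsum_inr : ∑ j, x (Sum.inr j) ≤ 1 := by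
          rw [← h1, Fintype.sum_sum_type]
          have hnn : 0 ≤ ∑ τ, x (Sum.inl τ) := Finset.sum_nonneg fun τ _ => h0 _
          linarith
        rw [hθdef] at hθe
        linarith
      have hxu : x = ubar := by
        have hsub0 : ∑ j, (x (Sum.inr j) - cmin x) = 0 := by
          rw [Finset.sum_sub_distrib, Finset.sum_const, Finset.card_univ, Fintype.card_fin,
            nsmul_eq_mul, hinr1]
          push_cast
          rw [hθdef] at hθe
          linarith
        have hall : ∀ j : Fin (m + 1), x (Sum.inr j) = cmin x := by
          intro j
          have := (Finset.sum_eq_zero_iff_of_nonneg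
            (fun j _ => sub_nonneg.2 (cmin_le x j))).1 hsub0 j (Finset.mem_univ j)
          linarith [this]
        have hinl0 : ∀ τ, x (Sum.inl τ) = 0 := by
          have hs0 : ∑ τ, x (Sum.inl τ) = 0 := by
            have := h1
            rw [Fintype.sum_sum_type, hinr1] at this
            linarith
          intro τ
          exact (Finset.sum_eq_zero_iff_of_nonneg (fun τ _ => h0 _)).1 hs0 τ (Finset.mem_univ τ)
        have hcval : cmin x = ((m : ℝ) + 1)⁻¹ := by
          rw [hθdef] at hθe
          field_simp
          linarith
        funext v
        rcases v with τ | k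
        · simp [ubar, hinl0 τ]
        · simp [ubar, hall k, hcval]
      rw [hxu]
      exact subset_convexHull _ _ (Finset.mem_coe.2 (Finset.mem_insert_self _ _))
    · have hθlt : θ < 1 := lt_of_le_of_ne hθ1 hθe
      have h1θne : (1 : ℝ) - θ ≠ 0 := by intro h; exact hθe (by linarith)
      have h1θpos : (0 : ℝ) < 1 - θ := by linarith
      set y : VT n m → ℝ := fun v => (1 - θ)⁻¹ * (x v - cmin x * em v) with hydef
      have hy : y ∈ convexHull ℝ (AbsSC.vtx '' ↑(s.erase (Sum.inr j0))) := by
        refine (mem_stdhull _ _).2 ⟨?_, ?_, ?_⟩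
        · intro v
          rcases v with τ | k
          · simp only [hydef, em, Sum.elim_inl, mul_zero, sub_zero]
            exact mul_nonneg (inv_nonneg.2 (le_of_lt h1θpos)) (h0 _)
          · simp only [hydef, em, Sum.elim_inr, mul_one]
            exact mul_nonneg (inv_nonneg.2 (le_of_lt h1θpos)) (sub_nonneg.2 (cmin_le x k))
        · simp only [hydef, ← Finset.mul_sum, Finset.sum_sub_distrib, ← Finset.mul_sum,
            sum_em, h1]
          rw [hθdef]
          have h' : (1:ℝ) - ((m:ℝ) + 1) * cmin x ≠ 0 := by rw [hθdef] at h1θne; exact h1θne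
          field_simp
        · intro v hvm
          rw [Finset.mem_erase] at hvm
          push_neg at hvm
          by_cases hvj : v = Sum.inr j0
          · rw [hvj]; simp [hydef, em, hj0]
          · have hx0 := hv _ (hvm hvj)
            rcases v with τ | k
            · simp [hydef, em, hx0]
            · exact (hz k hx0).elim
      have hcomb : x = (1 - θ) • y + θ • ubar := by
        funext v
        simp only [Pi.add_apply, Pi.smul_apply, smul_eq_mul, hydef]
        rcases v with τ | k
        · simp only [em, ubar, Sum.elim_inl, mul_zero, sub_zero, add_zero]
          field_simp
        · simp only [em, ubar, Sum.elim_inr, mul_one]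
          rw [hθdef]
          field_simp
          rw [mul_div_cancel_left₀ _ (by rw [hθdef] at h1θne; exact h1θne)]
          ring
      rw [hcomb]
      have hsub : (AbsSC.vtx '' ↑(s.erase (Sum.inr j0)))
          ⊆ (↑(insert ubar ((s.erase (Sum.inr j0)).image AbsSC.vtx)) : Set (VT n m → ℝ)) := by
        rw [Finset.coe_insert, ← Finset.coe_image]
        exact Set.subset_insert _ _
      exact (convex_convexHull ℝ _) (convexHull_mono hsub hy)
        (subset_convexHull _ _ (Finset.mem_coe.2 (Finset.mem_insert_self _ _)))
        (le_of_lt h1θpos) (le_of_lt hθ0) (by ring)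

lemma eqOn_phi (s : Finset (VT n m)) (j : Fin (m + 1)) :
    Set.EqOn phi ⇑(gphiL j).toAffineMap
      (convexHull ℝ (↑(insert ubar ((s.erase (Sum.inr j)).image AbsSC.vtx)) :
        Set (VT n m → ℝ))) := by
  classical
  intro x hxm
  have hxj : ∀ k, x (Sum.inr j) ≤ x (Sum.inr k) := by
    have hsubset : convexHull ℝ (↑(insert ubar ((s.erase (Sum.inr j)).image AbsSC.vtx)) :
        Set ((VT n m) → ℝ)) ⊆ {x : VT n m → ℝ | ∀ k, x (Sum.inr j) ≤ x (Sum.inr k)} := by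
      apply convexHull_min
      · intro p hp
        rcases Finset.mem_insert.1 (Finset.mem_coe.1 hp) with rfl | hp'
        · intro k; simp [ubar]
        · obtain ⟨v, hvmem, rfl⟩ := Finset.mem_image.1 hp'
          intro k
          have hvne : v ≠ Sum.inr j := (Finset.mem_erase.1 hvmem).1
          simp only [AbsSC.vtx]
          rw [if_neg (fun h => hvne h.symm)]
          split <;> norm_num
      · intro a ha b hb t1 t2 ht1 ht2 hsum k
        simp only [Pi.add_apply, Pi.smul_apply, smul_eq_mul]
        exact add_le_add (mul_le_mul_of_nonneg_left (ha k) ht1)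
          (mul_le_mul_of_nonneg_left (hb k) ht2)
    exact hsubset hxm
  have hcm : cmin x = x (Sum.inr j) := le_antisymm (cmin_le x j) (le_cmin hxj)
  show phi x = _
  funext v
  rw [LinearMap.coe_toAffineMap]
  simp only [phi, hcm, gphiL, LinearMap.coe_mk, AddHom.coe_mk]

lemma isPLOn_phi :
    IsPLOn (phi (n := n) (m := m)) (joinC (stdBoundaryC n).sd (stdSimplexC m)).realize := by
  classical
  refine ⟨((Set.toFinite (joinC (stdBoundaryC n).sd (stdSimplexC m)).faces).toFinset
      ×ˢ (Finset.univ : Finset (Fin (m + 1)))).image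
      (fun p => insert ubar ((p.1.erase (Sum.inr p.2)).image AbsSC.vtx)), ?_, ?_⟩
  · apply Set.Subset.antisymm
    · intro x hx
      obtain ⟨s, hsf, j, hmem⟩ := cover hx
      refine Set.mem_biUnion ?_ hmem
      exact Finset.mem_image.2 ⟨(s, j), Finset.mem_product.2
        ⟨(Set.Finite.mem_toFinset _).2 hsf, Finset.mem_univ j⟩, rfl⟩
    · intro x hx
      simp only [Set.mem_iUnion, exists_prop] at hx
      obtain ⟨cpc, hcT, hxc⟩ := hx
      obtain ⟨⟨s, j⟩, hprod, rfl⟩ := Finset.mem_image.1 hcT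
      exact piece_subset ((Set.Finite.mem_toFinset _).1 (Finset.mem_product.1 hprod).1) j hxc
  · rintro cp hcT
    obtain ⟨⟨s, j⟩, hprod, rfl⟩ := Finset.mem_image.1 hcT
    exact ⟨(gphiL j).toAffineMap, eqOn_phi s j⟩

lemma isPLOn_psi :
    IsPLOn (psi (n := n) (m := m)) (joinC (stdSimplexC n).sd (stdBoundaryC m)).realize :=
  isPLOn_linear _ psiL

end
end JoinSd


/-- for an `n`-simplex `σ` and an `m`-simplex `Δ` there is a
PL-homeomorphism `(∂σ)' ∗ Δ ≅ σ' ∗ ∂Δ`; the cone vertex of `Δ = Cone(w, ∂Δ)` may be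
pushed to the barycenter of `σ`. -/
theorem join_sdBoundary_pl_homeo (n m : ℕ) :
    PLHomeo (joinC (stdBoundaryC n).sd (stdSimplexC m))
      (joinC (stdSimplexC n).sd (stdBoundaryC m)) := by
  classical
  refine ⟨JoinSd.phi, JoinSd.psi,
    ⟨fun x hx => JoinSd.phi_mem hx, ?_, ?_⟩, JoinSd.isPLOn_phi, JoinSd.isPLOn_psi, ?_, ?_⟩
  · intro x hx x' hx' h
    rw [← JoinSd.psi_phi (JoinSd.apply_univ_eq_zero hx), h,
      JoinSd.psi_phi (JoinSd.apply_univ_eq_zero hx')]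
  · intro y hy
    obtain ⟨t, ht, h0, h1, hv⟩ := (realize_iff _ _).1 hy
    exact ⟨JoinSd.psi y, JoinSd.psi_mem hy, JoinSd.phi_psi h0 (JoinSd.exists_right_zero hy)⟩
  · intro x hx
    exact JoinSd.psi_phi (JoinSd.apply_univ_eq_zero hx)
  · intro y hy
    obtain ⟨t, ht, h0, h1, hv⟩ := (realize_iff _ _).1 hy
    exact JoinSd.phi_psi h0 (JoinSd.exists_right_zero hy)
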